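/- The determinant of the L×L circulant tridiagonal matrix R_L with diagonal entries A, superdiagonal entries B, subdiagonal entries C, and corner entries C (top-right) and B (bottom-left) equals ξ₊^L + ξ₋^L − (−B)^L − (−C)^L, where ξ± = (A ± √(A²−4BC))/2. -/

import Mathlib

open Finset Polynomial

lemma ctd_pow_mod {ζ : ℂ} {L : ℕ} (hζ : ζ ^ L = 1) (a : ℕ) : ζ ^ a = ζ ^ (a % L) := by
  conv_lhs => rw [← Nat.div_add_mod a L]
  rw [pow_add, pow_mul, hζ, one_pow, one_mul]

lemma ctd_prod_key {ω : ℂ} {L : ℕ} [NeZero L] (hL : 0 < L) (hω : IsPrimitiveRoot ω L)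
    (u v : ℂ) : ∏ k : Fin L, (u - v * ω ^ (k : ℕ)) = u ^ L - v ^ L := by
  rw [hω.pow_sub_pow_eq_prod_sub_mul u v hL]
  refine Finset.prod_nbij (i := fun k : Fin L => ω ^ (k : ℕ)) ?_ ?_ ?_ ?_
  · intro k _
    exact (Polynomial.mem_nthRootsFinset hL 1).2
      (by rw [← pow_mul, mul_comm, pow_mul, hω.pow_eq_one, one_pow])
  · intro a _ b _ h
    exact Fin.ext (hω.pow_inj a.isLt b.isLt h)
  · intro ζ hζ
    obtain ⟨i, hi, rfl⟩ := hω.eq_pow_of_pow_eq_one ((Polynomial.mem_nthRootsFinset hL 1).1 hζ)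
    exact ⟨⟨i, hi⟩, Finset.mem_univ _, rfl⟩
  · intro k _
    ring

theorem circulant_tridiagonal_det (L : ℕ) (hL : 3 ≤ L) (A B C ξp ξm : ℂ)
    (hsum : ξp + ξm = A) (hprod : ξp * ξm = B * C)
    (R : Matrix (Fin L) (Fin L) ℂ)
    (hR : ∀ i j : Fin L,
      R i j = if (i : ℕ) = (j : ℕ) then A
        else if (i : ℕ) + 1 = (j : ℕ) then B
        else if (j : ℕ) + 1 = (i : ℕ) then C
        else if (i : ℕ) = 0 ∧ (j : ℕ) = L - 1 then C
        else if (i : ℕ) = L - 1 ∧ (j : ℕ) = 0 then B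
        else 0) :
    R.det = ξp ^ L + ξm ^ L - (-B) ^ L - (-C) ^ L := by
  haveI : NeZero L := ⟨by omega⟩
  have hL0 : 0 < L := by omega
  set ω : ℂ := Complex.exp (2 * Real.pi * Complex.I / L) with hωdef
  have hω : IsPrimitiveRoot ω L := Complex.isPrimitiveRoot_exp L (by omega)
  have hω1 : ω ^ L = 1 := hω.pow_eq_one
  have hcongr : ∀ a b : ℕ, a % L = b % L → ω ^ a = ω ^ b := by
    intro a b h
    rw [ctd_pow_mod hω1 a, ctd_pow_mod hω1 b, h]
  have h1v : ((1 : Fin L) : ℕ) = 1 := by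
    rw [Fin.val_one']
    exact Nat.mod_eq_of_lt (by omega)
  set F : Matrix (Fin L) (Fin L) ℂ := fun i k => ω ^ ((i : ℕ) * (k : ℕ)) with hF
  set lam : Fin L → ℂ := fun k => A + B * ω ^ (k : ℕ) + C * ω ^ ((L - 1) * (k : ℕ)) with hlam
  -- eigenrelation
  have hcomm : R * F = F * Matrix.diagonal lam := by
    ext i k
    rw [Matrix.mul_apply, Matrix.mul_diagonal]
    have hiL := i.isLt
    have haddv : ((i + 1 : Fin L) : ℕ) = ((i : ℕ) + 1) % L := by
      rw [Fin.val_add, h1v]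
    have hsubv : ((i - 1 : Fin L) : ℕ) = (L - 1 + (i : ℕ)) % L := by
      rw [show ((i - 1 : Fin L) : ℕ) = (L - ((1 : Fin L) : ℕ) + (i : ℕ)) % L from rfl, h1v]
    have hadd' : ((i + 1 : Fin L) : ℕ) = if (i : ℕ) + 1 < L then (i : ℕ) + 1 else 0 := by
      rw [haddv]
      split_ifs with h
      · exact Nat.mod_eq_of_lt h
      · rw [show (i : ℕ) + 1 = L by omega]
        exact Nat.mod_self L
    have hsub' : ((i - 1 : Fin L) : ℕ) = if 0 < (i : ℕ) then (i : ℕ) - 1 else L - 1 := by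
      rw [hsubv]
      split_ifs with h
      · rw [show L - 1 + (i : ℕ) = ((i : ℕ) - 1) + L by omega, Nat.add_mod_right]
        exact Nat.mod_eq_of_lt (by omega)
      · rw [show L - 1 + (i : ℕ) = L - 1 by omega]
        exact Nat.mod_eq_of_lt (by omega)
    have hd1 : i ≠ i + 1 := by
      intro h
      have h2 := congrArg Fin.val h
      rw [hadd'] at h2
      split_ifs at h2 <;> omega
    have hd2 : i ≠ i - 1 := by
      intro h
      have h2 := congrArg Fin.val h
      rw [hsub'] at h2
      split_ifs at h2 <;> omega
    have hd3 : i + 1 ≠ i - 1 := by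
      intro h
      have h2 := congrArg Fin.val h
      rw [hadd', hsub'] at h2
      split_ifs at h2 <;> omega
    have key : ∀ j : Fin L, j ≠ i → j ≠ i + 1 → j ≠ i - 1 → R i j = 0 := by
      intro j hj1 hj2 hj3
      have hjL := j.isLt
      rw [hR]
      split_ifs with h1 h2 h3 h4 h5
      · exact absurd (Fin.ext h1.symm) hj1
      · exact absurd (Fin.ext (show (j : ℕ) = ((i + 1 : Fin L) : ℕ) by
          rw [hadd']; split_ifs <;> omega)) hj2
      · exact absurd (Fin.ext (show (j : ℕ) = ((i - 1 : Fin L) : ℕ) by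
          rw [hsub']; split_ifs <;> omega)) hj3
      · exact absurd (Fin.ext (show (j : ℕ) = ((i - 1 : Fin L) : ℕ) by
          rw [hsub']; split_ifs <;> omega)) hj3
      · exact absurd (Fin.ext (show (j : ℕ) = ((i + 1 : Fin L) : ℕ) by
          rw [hadd']; split_ifs <;> omega)) hj2
      · rfl
    have hRii : R i i = A := by
      rw [hR]; split_ifs <;> first | rfl | omega
    have hRi1 : R i (i + 1) = B := by
      rw [hR, hadd']; split_ifs <;> first | rfl | omega
    have hRi2 : R i (i - 1) = C := by
      rw [hR, hsub']; split_ifs <;> first | rfl | omega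
    have hsum3 : ∑ j, R i j * F j k
        = R i i * F i k + (R i (i + 1) * F (i + 1) k + R i (i - 1) * F (i - 1) k) := by
      rw [← Finset.sum_subset (Finset.subset_univ ({i, i + 1, i - 1} : Finset (Fin L)))
        (fun j _ hj => ?_)]
      · rw [Finset.sum_insert (by simp [hd1, hd2]), Finset.sum_insert (by simp [hd3]),
          Finset.sum_singleton]
      · simp only [Finset.mem_insert, Finset.mem_singleton, not_or] at hj
        rw [key j hj.1 hj.2.1 hj.2.2, zero_mul]
    rw [hsum3, hRii, hRi1, hRi2]
    have hkL := k.isLt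
    have e1 : F (i + 1) k = ω ^ (((i : ℕ) + 1) * (k : ℕ)) := by
      apply hcongr
      rw [Nat.mul_mod, haddv, Nat.mod_mod_of_dvd _ dvd_rfl, ← Nat.mul_mod]
    have e2 : F (i - 1) k = ω ^ ((L - 1 + (i : ℕ)) * (k : ℕ)) := by
      apply hcongr
      rw [Nat.mul_mod, hsubv, Nat.mod_mod_of_dvd _ dvd_rfl, ← Nat.mul_mod]
    rw [e1, e2]
    show A * ω ^ ((i : ℕ) * (k : ℕ)) + (B * ω ^ (((i : ℕ) + 1) * (k : ℕ))
        + C * ω ^ ((L - 1 + (i : ℕ)) * (k : ℕ)))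
      = ω ^ ((i : ℕ) * (k : ℕ)) * (A + B * ω ^ (k : ℕ) + C * ω ^ ((L - 1) * (k : ℕ)))
    rw [add_mul, add_mul, one_mul, pow_add, pow_add]
    ring
  -- determinant of F is nonzero
  have hFv : F = Matrix.vandermonde (fun i : Fin L => ω ^ (i : ℕ)) := by
    ext i j
    simp [Matrix.vandermonde, hF, pow_mul]
  have hdetF : F.det ≠ 0 := by
    rw [hFv, Matrix.det_vandermonde]
    rw [Finset.prod_ne_zero_iff]
    intro i _
    rw [Finset.prod_ne_zero_iff]
    intro j hj
    rw [Finset.mem_Ioi] at hj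
    rw [sub_ne_zero]
    intro h
    exact absurd (Fin.ext (hω.pow_inj j.isLt i.isLt h)) (ne_of_gt hj)
  -- det R = prod of eigenvalues
  have hdet : R.det = ∏ k, lam k := by
    have h2 := congrArg Matrix.det hcomm
    rw [Matrix.det_mul, Matrix.det_mul, Matrix.det_diagonal, mul_comm F.det] at h2
    exact mul_right_cancel₀ hdetF h2
  -- product of all roots of unity
  have hprodz : ∏ k : Fin L, ω ^ (k : ℕ) = -(-1 : ℂ) ^ L := by
    have h2 := ctd_prod_key hL0 hω 0 (-1)
    rw [zero_pow (by omega), zero_sub] at h2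
    rw [← h2]
    exact Finset.prod_congr rfl fun k _ => by ring
  -- relation between lam product and quadratic product
  have ht : ((-1 : ℂ) ^ L) * ((-1 : ℂ) ^ L) = 1 := by
    rw [← mul_pow]; norm_num
  have hQ : (∏ k, lam k) * (-(-1 : ℂ) ^ L)
      = ∏ k : Fin L, (B * (ω ^ (k : ℕ)) ^ 2 + A * ω ^ (k : ℕ) + C) := by
    rw [← hprodz, ← Finset.prod_mul_distrib]
    apply Finset.prod_congr rfl
    intro k _
    have h5 : (L - 1) * (k : ℕ) + (k : ℕ) = L * (k : ℕ) := by
      obtain ⟨n, rfl⟩ : ∃ n, L = n + 1 := ⟨L - 1, by omega⟩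
      simp [Nat.succ_sub_one]
      ring
    have hzL : ω ^ ((L - 1) * (k : ℕ)) * ω ^ (k : ℕ) = 1 := by
      rw [← pow_add, h5, pow_mul, hω1, one_pow]
    show lam k * ω ^ (k : ℕ) = _
    rw [hlam]
    linear_combination C * hzL
  -- evaluate the quadratic product
  have hbc : ξp ^ L * ξm ^ L = B ^ L * C ^ L := by
    rw [← mul_pow, ← mul_pow, hprod]
  have hQval : (∏ k : Fin L, (B * (ω ^ (k : ℕ)) ^ 2 + A * ω ^ (k : ℕ) + C))
      = B ^ L + C ^ L - (-1 : ℂ) ^ L * (ξp ^ L + ξm ^ L) := by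
    by_cases hC : C ≠ 0
    · have hCL : (C : ℂ) ^ L ≠ 0 := pow_ne_zero _ hC
      apply mul_left_cancel₀ hCL
      calc C ^ L * ∏ k : Fin L, (B * (ω ^ (k : ℕ)) ^ 2 + A * ω ^ (k : ℕ) + C)
          = ∏ k : Fin L, (C * (B * (ω ^ (k : ℕ)) ^ 2 + A * ω ^ (k : ℕ) + C)) := by
            rw [Finset.prod_mul_distrib, Finset.prod_const, Finset.card_univ, Fintype.card_fin]
        _ = ∏ k : Fin L, ((C - (-ξp) * ω ^ (k : ℕ)) * (C - (-ξm) * ω ^ (k : ℕ))) := by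
            refine Finset.prod_congr rfl fun k _ => ?_
            linear_combination (-(ω ^ (k : ℕ)) ^ 2) * hprod + (-(C * ω ^ (k : ℕ))) * hsum
        _ = (∏ k : Fin L, (C - (-ξp) * ω ^ (k : ℕ)))
              * ∏ k : Fin L, (C - (-ξm) * ω ^ (k : ℕ)) := Finset.prod_mul_distrib
        _ = (C ^ L - (-ξp) ^ L) * (C ^ L - (-ξm) ^ L) := by
            rw [ctd_prod_key hL0 hω, ctd_prod_key hL0 hω]
        _ = C ^ L * (B ^ L + C ^ L - (-1 : ℂ) ^ L * (ξp ^ L + ξm ^ L)) := by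
            rw [neg_pow ξp, neg_pow ξm]
            linear_combination ((-1 : ℂ) ^ L * (-1 : ℂ) ^ L) * hbc + (B ^ L * C ^ L) * ht
    · push_neg at hC
      by_cases hB : B ≠ 0
      · have hBL : (B : ℂ) ^ L ≠ 0 := pow_ne_zero _ hB
        apply mul_left_cancel₀ hBL
        calc B ^ L * ∏ k : Fin L, (B * (ω ^ (k : ℕ)) ^ 2 + A * ω ^ (k : ℕ) + C)
            = ∏ k : Fin L, (B * (B * (ω ^ (k : ℕ)) ^ 2 + A * ω ^ (k : ℕ) + C)) := by
              rw [Finset.prod_mul_distrib, Finset.prod_const, Finset.card_univ, Fintype.card_fin]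
          _ = ∏ k : Fin L, ((ξp - (-B) * ω ^ (k : ℕ)) * (ξm - (-B) * ω ^ (k : ℕ))) := by
              refine Finset.prod_congr rfl fun k _ => ?_
              linear_combination (-(B * ω ^ (k : ℕ))) * hsum - hprod
          _ = (∏ k : Fin L, (ξp - (-B) * ω ^ (k : ℕ)))
                * ∏ k : Fin L, (ξm - (-B) * ω ^ (k : ℕ)) := Finset.prod_mul_distrib
          _ = (ξp ^ L - (-B) ^ L) * (ξm ^ L - (-B) ^ L) := by
              rw [ctd_prod_key hL0 hω, ctd_prod_key hL0 hω]
          _ = B ^ L * (B ^ L + C ^ L - (-1 : ℂ) ^ L * (ξp ^ L + ξm ^ L)) := by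
              rw [neg_pow B]
              linear_combination hbc + (B ^ L * B ^ L) * ht
      · push_neg at hB
        subst hB; subst hC
        have hS : ξp ^ L + ξm ^ L = A ^ L := by
          rcases mul_eq_zero.1 (by rw [hprod]; ring) with h | h
          · rw [h, zero_pow (by omega), zero_add]
            rw [show ξm = A by linear_combination hsum - h]
          · rw [h, zero_pow (by omega), add_zero]
            rw [show ξp = A by linear_combination hsum - h]
        calc (∏ k : Fin L, ((0 : ℂ) * (ω ^ (k : ℕ)) ^ 2 + A * ω ^ (k : ℕ) + 0))
            = ∏ k : Fin L, (A * ω ^ (k : ℕ)) := by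
              refine Finset.prod_congr rfl fun k _ => by ring
          _ = A ^ L * ∏ k : Fin L, ω ^ (k : ℕ) := by
              rw [Finset.prod_mul_distrib, Finset.prod_const, Finset.card_univ, Fintype.card_fin]
          _ = A ^ L * (-(-1 : ℂ) ^ L) := by rw [hprodz]
          _ = (0 : ℂ) ^ L + (0 : ℂ) ^ L - (-1 : ℂ) ^ L * (ξp ^ L + ξm ^ L) := by
              rw [hS, zero_pow (by omega)]
              ring
  -- assemble
  have heq : (∏ k, lam k) * (-(-1 : ℂ) ^ L)
      = B ^ L + C ^ L - (-1 : ℂ) ^ L * (ξp ^ L + ξm ^ L) := by rw [hQ, hQval]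
  rw [hdet, neg_pow B, neg_pow C]
  linear_combination (-(-1 : ℂ) ^ L) * heq + (ξp ^ L + ξm ^ L - ∏ k, lam k) * ht
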